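/- Let A and B be n-by-n weighted shift matrices (n ≥ 3) with weights a_1, …, a_n and b_1, …, b_n respectively, and suppose that at most two of the weights a_1, …, a_n are zero. Then A is unitarily equivalent to B if and only if a_1⋯a_n = b_1⋯b_n and there exists a fixed k with 1 ≤ k ≤ n such that |a_j| = |b_{k+j}| for all 1 ≤ j ≤ n (indices of the weights taken cyclically modulo n). -/

import Mathlib

open Matrix

/-- The n-by-n weighted shift matrix with weights `a 0, …, a (n-1)`
(representing `a_1, …, a_n`): the `(i, i+1)` entry is `a i` (cyclically). -/
def wsMatrix {n : ℕ} (a : Fin n → ℂ) : Matrix (Fin n) (Fin n) ℂ :=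
  fun i j => if (j : ℕ) = ((i : ℕ) + 1) % n then a i else 0

/-- Two square complex matrices are unitarily equivalent if `B = U* A U`
for some unitary `U`. -/
def UnitarilyEquiv {n : ℕ} (A B : Matrix (Fin n) (Fin n) ℂ) : Prop :=
  ∃ U : Matrix (Fin n) (Fin n) ℂ, U ∈ Matrix.unitaryGroup (Fin n) ℂ ∧ B = Uᴴ * A * U

section prelim
variable {n : ℕ} [NeZero n]
open Fin.CommRing

lemma ws_apply (hn : 3 ≤ n) (a : Fin n → ℂ) (i j : Fin n) :
    wsMatrix a i j = if j = i + 1 then a i else 0 := by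
  have h1 : ((1 : Fin n) : ℕ) = 1 := by
    rw [Fin.val_one']
    exact Nat.mod_eq_of_lt (by omega)
  have hc : ((j : ℕ) = ((i : ℕ) + 1) % n) ↔ (j = i + 1) := by
    rw [Fin.ext_iff, Fin.val_add, h1]
  rw [wsMatrix]
  simp only [hc]

lemma ws_mul_apply (hn : 3 ≤ n) (a : Fin n → ℂ) (U : Matrix (Fin n) (Fin n) ℂ) (i j : Fin n) :
    (wsMatrix a * U) i j = a i * U (i + 1) j := by
  rw [Matrix.mul_apply]
  rw [Finset.sum_eq_single (i + 1)]
  · rw [ws_apply hn, if_pos rfl]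
  · intro k _ hk
    rw [ws_apply hn, if_neg hk, zero_mul]
  · simp

lemma mul_ws_apply (hn : 3 ≤ n) (b : Fin n → ℂ) (U : Matrix (Fin n) (Fin n) ℂ) (i j : Fin n) :
    (U * wsMatrix b) i j = b (j - 1) * U i (j - 1) := by
  rw [Matrix.mul_apply]
  rw [Finset.sum_eq_single (j - 1)]
  · rw [ws_apply hn, if_pos (by ring), mul_comm]
  · intro k _ hk
    rw [ws_apply hn, if_neg (fun h => hk (by rw [h]; ring)), mul_zero]
  · simp

lemma wsH_mul_apply (hn : 3 ≤ n) (a : Fin n → ℂ) (U : Matrix (Fin n) (Fin n) ℂ) (i j : Fin n) :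
    ((wsMatrix a)ᴴ * U) i j = (starRingEnd ℂ) (a (i - 1)) * U (i - 1) j := by
  rw [Matrix.mul_apply]
  rw [Finset.sum_eq_single (i - 1)]
  · rw [Matrix.conjTranspose_apply, ws_apply hn, if_pos (by ring)]; rfl
  · intro k _ hk
    rw [Matrix.conjTranspose_apply, ws_apply hn,
      if_neg (fun h => hk (by rw [h]; ring)), star_zero, zero_mul]
  · simp

lemma mul_wsH_apply (hn : 3 ≤ n) (b : Fin n → ℂ) (U : Matrix (Fin n) (Fin n) ℂ) (i j : Fin n) :
    (U * (wsMatrix b)ᴴ) i j = (starRingEnd ℂ) (b j) * U i (j + 1) := by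
  rw [Matrix.mul_apply]
  rw [Finset.sum_eq_single (j + 1)]
  · rw [Matrix.conjTranspose_apply, ws_apply hn, if_pos rfl, mul_comm]; rfl
  · intro k _ hk
    rw [Matrix.conjTranspose_apply, ws_apply hn, if_neg hk, star_zero, mul_zero]
  · simp

end prelim

section conseq
variable {n : ℕ} [NeZero n]
open Fin.CommRing

lemma rel_of_ue (hn : 3 ≤ n) (a b : Fin n → ℂ) (U : Matrix (Fin n) (Fin n) ℂ)
    (hU : U ∈ Matrix.unitaryGroup (Fin n) ℂ) (hB : wsMatrix b = Uᴴ * wsMatrix a * U) :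
    (∀ i j, a i * U (i+1) (j+1) = b j * U i j) ∧
    (∀ i j, (starRingEnd ℂ) (a i) * U i j = (starRingEnd ℂ) (b j) * U (i+1) (j+1)) := by
  have hU1 : U * Uᴴ = 1 := by
    have := (Matrix.mem_unitaryGroup_iff).mp hU
    rwa [Matrix.star_eq_conjTranspose] at this
  have hAU : wsMatrix a * U = U * wsMatrix b := by
    rw [hB, ← Matrix.mul_assoc, ← Matrix.mul_assoc, hU1, Matrix.one_mul]
  have hBH : (wsMatrix b)ᴴ = Uᴴ * (wsMatrix a)ᴴ * U := by
    rw [hB, Matrix.conjTranspose_mul, Matrix.conjTranspose_mul,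
      Matrix.conjTranspose_conjTranspose, Matrix.mul_assoc]
  have hAHU : (wsMatrix a)ᴴ * U = U * (wsMatrix b)ᴴ := by
    rw [hBH, ← Matrix.mul_assoc, ← Matrix.mul_assoc, hU1, Matrix.one_mul]
  constructor
  · intro i j
    have := congrFun (congrFun hAU i) (j + 1)
    rw [ws_mul_apply hn, mul_ws_apply hn, add_sub_cancel_right] at this
    exact this
  · intro i j
    have := congrFun (congrFun hAHU (i + 1)) j
    rw [wsH_mul_apply hn, mul_wsH_apply hn, add_sub_cancel_right] at this
    exact this

lemma ws_eq_diag_mul (hn : 3 ≤ n) (a : Fin n → ℂ) :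
    wsMatrix a = Matrix.diagonal a * wsMatrix (fun _ => (1 : ℂ)) := by
  ext i j
  by_cases h : j = i + 1 <;>
    simp [Matrix.diagonal_mul, ws_apply hn, h]

lemma shiftP_unitary (hn : 3 ≤ n) :
    (wsMatrix (fun _ => (1 : ℂ))) ∈ Matrix.unitaryGroup (Fin n) ℂ := by
  rw [Matrix.mem_unitaryGroup_iff, Matrix.star_eq_conjTranspose]
  ext i j
  rw [Matrix.mul_apply]
  rw [Finset.sum_eq_single (i + 1)]
  · rw [Matrix.conjTranspose_apply, ws_apply hn, if_pos rfl, one_mul, Matrix.one_apply,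
      ws_apply hn]
    by_cases h : i = j
    · simp [h]
    · rw [if_neg (fun h' : i + 1 = j + 1 => h (add_right_cancel h')), if_neg h, star_zero]
  · intro k _ hk
    rw [ws_apply hn, if_neg hk, zero_mul]
  · simp

lemma det_ws (hn : 3 ≤ n) (a : Fin n → ℂ) :
    (wsMatrix a).det = (∏ j, a j) * (wsMatrix (fun _ => (1 : ℂ)) : Matrix (Fin n) (Fin n) ℂ).det := by
  rw [ws_eq_diag_mul hn, Matrix.det_mul, Matrix.det_diagonal]

lemma unitary_det_isUnit {U : Matrix (Fin n) (Fin n) ℂ}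
    (hU : U ∈ Matrix.unitaryGroup (Fin n) ℂ) : IsUnit U.det := by
  have hU1 : U * Uᴴ = 1 := by
    have := (Matrix.mem_unitaryGroup_iff).mp hU
    rwa [Matrix.star_eq_conjTranspose] at this
  have : U.det * Uᴴ.det = 1 := by rw [← Matrix.det_mul, hU1, Matrix.det_one]
  exact IsUnit.of_mul_eq_one _ this

lemma prod_eq_of_ue (hn : 3 ≤ n) (a b : Fin n → ℂ)
    (h : UnitarilyEquiv (wsMatrix a) (wsMatrix b)) : ∏ j, a j = ∏ j, b j := by
  obtain ⟨U, hU, hB⟩ := h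
  have hdet : (wsMatrix b).det = (wsMatrix a).det := by
    rw [hB, Matrix.det_mul, Matrix.det_mul]
    have h1 : U.det * Uᴴ.det = 1 := by
      have hU1 : U * Uᴴ = 1 := by
        have := (Matrix.mem_unitaryGroup_iff).mp hU
        rwa [Matrix.star_eq_conjTranspose] at this
      rw [← Matrix.det_mul, hU1, Matrix.det_one]
    calc Uᴴ.det * (wsMatrix a).det * U.det = (wsMatrix a).det * (U.det * Uᴴ.det) := by ring
    _ = (wsMatrix a).det := by rw [h1, mul_one]
  rw [det_ws hn b, det_ws hn a] at hdet
  have hP : (wsMatrix (fun _ => (1 : ℂ)) : Matrix (Fin n) (Fin n) ℂ).det ≠ 0 := by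
    intro h0
    have := unitary_det_isUnit (shiftP_unitary (n := n) hn)
    rw [h0] at this
    exact (not_isUnit_zero this)
  exact (mul_right_cancel₀ hP hdet).symm

lemma card_zero_eq_of_ue (hn : 3 ≤ n) (a b : Fin n → ℂ)
    (h : UnitarilyEquiv (wsMatrix a) (wsMatrix b)) :
    (Finset.univ.filter fun j => b j = 0).card = (Finset.univ.filter fun j => a j = 0).card := by
  obtain ⟨U, hU, hB⟩ := h
  have hrank : (wsMatrix b).rank = (wsMatrix a).rank := by
    rw [hB]
    rw [Matrix.rank_mul_eq_left_of_isUnit_det _ _ (unitary_det_isUnit hU)]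
    have : IsUnit (Uᴴ).det := by
      have hU1 : U * Uᴴ = 1 := by
        have := (Matrix.mem_unitaryGroup_iff).mp hU
        rwa [Matrix.star_eq_conjTranspose] at this
      exact IsUnit.of_mul_eq_one _ (by rw [← Matrix.det_mul, mul_eq_one_comm.mp hU1, Matrix.det_one])
    rw [Matrix.rank_mul_eq_right_of_isUnit_det _ _ this]
  have hrw : ∀ c : Fin n → ℂ, (wsMatrix c).rank = Fintype.card {i // c i ≠ 0} := by
    intro c
    rw [ws_eq_diag_mul hn,
      Matrix.rank_mul_eq_left_of_isUnit_det _ _ (unitary_det_isUnit (shiftP_unitary hn)),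
      Matrix.rank_diagonal]
  rw [hrw a, hrw b] at hrank
  have hc : ∀ c : Fin n → ℂ,
      (Finset.univ.filter fun j => c j = 0).card + Fintype.card {i // c i ≠ 0} = n := by
    intro c
    rw [Fintype.card_subtype]
    have h2 := Finset.card_filter_add_card_filter_not
      (s := (Finset.univ : Finset (Fin n))) (p := fun j => c j = 0)
    simpa [Finset.card_univ] using h2
  have := hc a
  have := hc b
  omega

end conseq

section chains
variable {n : ℕ} [NeZero n] (a b : Fin n → ℂ) (U : Fin n → Fin n → ℂ)
open Fin.CommRing

lemma cast_succ_shift (x : Fin n) (s : ℕ) :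
    x + 1 + ((s : ℕ) : Fin n) = x + (((s+1 : ℕ)) : Fin n) := by
  push_cast
  ring

lemma step
    (h1 : ∀ i j, a i * U (i+1) (j+1) = b j * U i j)
    (h2 : ∀ i j, (starRingEnd ℂ) (a i) * U i j = (starRingEnd ℂ) (b j) * U (i+1) (j+1))
    {i j : Fin n} (hU : U i j ≠ 0) (ha : a i ≠ 0) :
    U (i+1) (j+1) ≠ 0 ∧ norm (a i) = norm (b j) := by
  have e1 := h1 i j
  have e2 := h2 i j
  have hca : (starRingEnd ℂ) (a i) ≠ 0 := by simpa using ha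
  have hne : (starRingEnd ℂ) (b j) * U (i+1) (j+1) ≠ 0 := e2 ▸ mul_ne_zero hca hU
  have hU' : U (i+1) (j+1) ≠ 0 := right_ne_zero_of_mul hne
  refine ⟨hU', ?_⟩
  have a1 := congrArg norm e1
  have a2 := congrArg norm e2
  simp only [norm_mul, Complex.norm_conj] at a1 a2
  have hpos : norm (U (i+1) (j+1)) + norm (U i j) ≠ 0 :=
    ne_of_gt (add_pos (norm_pos_iff.mpr hU') (norm_pos_iff.mpr hU))
  have h3 : norm (a i) * (norm (U (i+1) (j+1)) + norm (U i j))
      = norm (b j) * (norm (U (i+1) (j+1)) + norm (U i j)) := by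
    rw [mul_add, mul_add, a1, a2]
    ring
  exact mul_right_cancel₀ hpos h3

lemma zstep
    (h1 : ∀ i j, a i * U (i+1) (j+1) = b j * U i j)
    {i j : Fin n} (hU : U i j ≠ 0) (ha : a i = 0) : b j = 0 := by
  have e1 := h1 i j
  rw [ha, zero_mul] at e1
  exact (mul_eq_zero.mp e1.symm).resolve_right hU

lemma zstep'
    (h2 : ∀ i j, (starRingEnd ℂ) (a i) * U i j = (starRingEnd ℂ) (b j) * U (i+1) (j+1))
    {i j : Fin n} (hU : U (i+1) (j+1) ≠ 0) (ha : a i = 0) : b j = 0 := by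
  have e2 := h2 i j
  rw [ha, map_zero, zero_mul] at e2
  have := (mul_eq_zero.mp e2.symm).resolve_right hU
  simpa using this

lemma chain
    (h1 : ∀ i j, a i * U (i+1) (j+1) = b j * U i j)
    (h2 : ∀ i j, (starRingEnd ℂ) (a i) * U i j = (starRingEnd ℂ) (b j) * U (i+1) (j+1))
    {i j : Fin n} (hU : U i j ≠ 0) (T : ℕ)
    (ha : ∀ t : ℕ, t < T → a (i + (t : Fin n)) ≠ 0) :
    U (i + (T : Fin n)) (j + (T : Fin n)) ≠ 0 ∧
      ∀ t : ℕ, t < T → norm (a (i + (t : Fin n))) = norm (b (j + (t : Fin n))) := by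
  induction T with
  | zero =>
    refine ⟨by simpa using hU, by omega⟩
  | succ T ih =>
    obtain ⟨hUT, hm⟩ := ih (fun t ht => ha t (by omega))
    have st := step a b U h1 h2 hUT (ha T (by omega))
    have hcast : ∀ x : Fin n, x + (((T+1 : ℕ)) : Fin n) = x + (T : Fin n) + 1 := by
      intro x
      push_cast
      ring
    constructor
    · rw [hcast i, hcast j]
      exact st.1
    · intro t ht
      rcases Nat.lt_succ_iff_lt_or_eq.mp ht with h | h
      · exact hm t h
      · subst h
        exact st.2

lemma arcLemma
    (h1 : ∀ i j, a i * U (i+1) (j+1) = b j * U i j)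
    (h2 : ∀ i j, (starRingEnd ℂ) (a i) * U i j = (starRingEnd ℂ) (b j) * U (i+1) (j+1))
    (p : Fin n) (d : ℕ) (κ : Fin n) (hd1 : 1 ≤ d)
    (hp : a p = 0) (hmid : ∀ t : ℕ, 0 < t → t < d → a (p + (t : Fin n)) ≠ 0)
    (hpd : a (p + (d : Fin n)) = 0)
    (hU : U (p + 1) (p + 1 + κ) ≠ 0) :
    b (p + κ) = 0 ∧ b (p + (d : Fin n) + κ) = 0 ∧
      ∀ t : ℕ, 0 < t → t < d → norm (a (p + (t : Fin n))) = norm (b (p + (t : Fin n) + κ)) := by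
  obtain ⟨hU', hm⟩ := chain a b U h1 h2 hU (d - 1)
    (fun t ht => by
      rw [cast_succ_shift]
      exact hmid (t+1) (by omega) (by omega))
  have hone : ∀ x : Fin n, x + 1 + (((d-1 : ℕ)) : Fin n) = x + ((d : ℕ) : Fin n) := by
    intro x
    rw [cast_succ_shift]
    congr 1
    congr 1
    omega
  refine ⟨?_, ?_, ?_⟩
  · have hU2 : U (p + 1) ((p + κ) + 1) ≠ 0 := by
      have : (p + κ) + 1 = p + 1 + κ := by ring
      rw [this]
      exact hU
    exact zstep' a b U h2 hU2 hp
  · have hU3 : U (p + ((d:ℕ) : Fin n)) (p + ((d:ℕ):Fin n) + κ) ≠ 0 := by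
      have e1 : p + 1 + (((d-1:ℕ)) : Fin n) = p + ((d:ℕ):Fin n) := hone p
      have e2 : p + 1 + κ + (((d-1:ℕ)) : Fin n) = p + ((d:ℕ):Fin n) + κ := by
        have := hone (p + κ)
        calc p + 1 + κ + (((d-1:ℕ)) : Fin n) = p + κ + 1 + (((d-1:ℕ)) : Fin n) := by ring
        _ = p + κ + ((d:ℕ):Fin n) := this
        _ = p + ((d:ℕ):Fin n) + κ := by ring
      have h := hU'
      rw [e1, e2] at h
      exact h
    exact zstep a b U h1 hU3 hpd
  · intro t ht0 htd
    have := hm (t-1) (by omega)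
    have e1 : p + 1 + (((t-1:ℕ)) : Fin n) = p + ((t:ℕ):Fin n) := by
      rw [cast_succ_shift]
      congr 1
      congr 1
      omega
    have e2 : p + 1 + κ + (((t-1:ℕ)) : Fin n) = p + ((t:ℕ):Fin n) + κ := by
      calc p + 1 + κ + (((t-1:ℕ)) : Fin n) = p + 1 + (((t-1:ℕ)) : Fin n) + κ := by ring
      _ = p + ((t:ℕ):Fin n) + κ := by rw [e1]
    rw [e1, e2] at this
    exact this

end chains

section reverse
variable {n : ℕ} [NeZero n]
open Fin.CommRing

lemma conj_mul_self_of_abs {z : ℂ} (h : norm z = 1) :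
    (starRingEnd ℂ) z * z = 1 := by
  rw [mul_comm, Complex.mul_conj, Complex.normSq_eq_norm_sq, h]
  norm_num

lemma ue_of_data (hn : 3 ≤ n) (a b : Fin n → ℂ) (κ : Fin n) (d : Fin n → ℂ)
    (hd : ∀ i, norm (d i) = 1)
    (hC : ∀ m, (starRingEnd ℂ) (d m) * d (m+1) * a m = b (m + κ)) :
    UnitarilyEquiv (wsMatrix a) (wsMatrix b) := by
  set U : Matrix (Fin n) (Fin n) ℂ := Matrix.of fun i j => if j = i + κ then d i else 0 with hUdef
  have hUapp : ∀ i j, U i j = if j = i + κ then d i else 0 := fun i j => rfl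
  have hmem : U ∈ Matrix.unitaryGroup (Fin n) ℂ := by
    rw [Matrix.mem_unitaryGroup_iff, Matrix.star_eq_conjTranspose]
    ext i j
    rw [Matrix.mul_apply]
    rw [Finset.sum_eq_single (i + κ)]
    · rw [Matrix.conjTranspose_apply, hUapp, if_pos rfl, hUapp, Matrix.one_apply]
      by_cases h : i = j
      · subst h
        rw [if_pos rfl, if_pos rfl]
        simp only [Complex.star_def]
        rw [mul_comm]
        exact conj_mul_self_of_abs (hd i)
      · rw [if_neg (fun h' : i + κ = j + κ => h (add_right_cancel h')), if_neg h, star_zero,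
          mul_zero]
    · intro k _ hk
      rw [hUapp, if_neg hk, zero_mul]
    · simp
  refine ⟨U, hmem, ?_⟩
  ext p q
  rw [Matrix.mul_assoc, Matrix.mul_apply]
  rw [Finset.sum_eq_single (p - κ)]
  · rw [Matrix.conjTranspose_apply, hUapp, if_pos (by ring), ws_mul_apply hn, hUapp]
    have harr : (p - κ) + 1 + κ = p + 1 := by ring
    rw [harr]
    rw [ws_apply hn]
    by_cases h : q = p + 1
    · rw [if_pos h, if_pos h]
      have hCm := hC (p - κ)
      have harr2 : (p - κ) + κ = p := by ring
      rw [harr2] at hCm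
      rw [← hCm]
      simp only [Complex.star_def]
      ring
    · rw [if_neg h, if_neg h]
      simp
  · intro k _ hk
    rw [Matrix.conjTranspose_apply, hUapp,
      if_neg (fun h : p = k + κ => hk (by rw [h]; ring)), star_zero, zero_mul]
  · simp

lemma val_add_one_of_ne_neg_one {x : Fin n} (hn : 3 ≤ n) (hx : x + 1 ≠ 0) :
    ((x + 1 : Fin n) : ℕ) = (x : ℕ) + 1 := by
  have h1 : ((1 : Fin n) : ℕ) = 1 := by
    rw [Fin.val_one']
    exact Nat.mod_eq_of_lt (by omega)
  have h2 : ((x + 1 : Fin n) : ℕ) = ((x : ℕ) + 1) % n := by rw [Fin.val_add, h1]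
  have hlt : (x : ℕ) < n := x.isLt
  rcases Nat.lt_or_ge ((x : ℕ) + 1) n with h | h
  · rw [h2, Nat.mod_eq_of_lt h]
  · exfalso
    have hxn : (x : ℕ) + 1 = n := by omega
    apply hx
    apply Fin.ext
    rw [h2, hxn, Nat.mod_self]
    rfl

lemma ue_of_shift (hn : 3 ≤ n) (a b : Fin n → ℂ) (κ : Fin n)
    (hprod : ∏ j, a j = ∏ j, b j)
    (habs : ∀ j : Fin n, norm (a j) = norm (b (j + κ))) :
    UnitarilyEquiv (wsMatrix a) (wsMatrix b) := by
  by_cases hz : ∃ m0 : Fin n, a m0 = 0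
  · obtain ⟨m0, hm0⟩ := hz
    set φ : Fin n → ℂ := fun m => if a m = 0 then 1 else b (m + κ) / a m with hφ
    have hφabs : ∀ m, norm (φ m) = 1 := by
      intro m
      rw [hφ]
      by_cases h : a m = 0
      · simp [h]
      · simp only [h, if_false]
        rw [norm_div, ← habs m, div_self (by simpa using h)]
    set d : Fin n → ℂ := fun i => ∏ t ∈ Finset.range ((i - m0 - 1 : Fin n) : ℕ), φ (m0 + 1 + (t : Fin n)) with hdd
    have hdabs : ∀ i, norm (d i) = 1 := by
      intro i
      rw [hdd]
      simp only
      rw [norm_prod]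
      exact Finset.prod_eq_one (fun t _ => hφabs _)
    refine ue_of_data hn a b κ d hdabs ?_
    intro m
    by_cases hm : a m = 0
    · have : b (m + κ) = 0 := by
        have := habs m
        rw [hm] at this
        simp only [norm_zero] at this
        exact (norm_eq_zero.mp this.symm)
      rw [hm, this, mul_zero]
    · have hmne : m ≠ m0 := fun h => hm (h ▸ hm0)
      have hstep : d (m + 1) = d m * φ m := by
        have hx1 : (m - m0 - 1 : Fin n) + 1 ≠ 0 := by
          intro h
          apply hmne
          have : m - m0 = 0 := by
            have : (m - m0 - 1 : Fin n) + 1 = m - m0 := by ring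
            rwa [this] at h
          exact sub_eq_zero.mp this
        have hval : ((m + 1 - m0 - 1 : Fin n) : ℕ) = ((m - m0 - 1 : Fin n) : ℕ) + 1 := by
          have harr : (m + 1 - m0 - 1 : Fin n) = (m - m0 - 1) + 1 := by ring
          rw [harr, val_add_one_of_ne_neg_one hn hx1]
        rw [hdd]
        simp only
        rw [hval, Finset.prod_range_succ]
        congr 1
        rw [Fin.cast_val_eq_self]
        ring
      rw [hstep]
      have : (starRingEnd ℂ) (d m) * (d m * φ m) * a m
          = ((starRingEnd ℂ) (d m) * d m) * (φ m * a m) := by ring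
      rw [this, conj_mul_self_of_abs (hdabs m), one_mul, hφ]
      simp only [hm, if_false]
      rw [div_mul_cancel₀ _ hm]
  · push_neg at hz
    set φ : Fin n → ℂ := fun m => b (m + κ) / a m with hφ
    have hφabs : ∀ m, norm (φ m) = 1 := by
      intro m
      rw [hφ]
      simp only
      rw [norm_div, ← habs m, div_self (by simpa using hz m)]
    set f : ℕ → ℂ := fun t => φ ((t : ℕ) : Fin n) with hf
    set d : Fin n → ℂ := fun i => ∏ t ∈ Finset.range (i : ℕ), f t with hdd
    have hdabs : ∀ i, norm (d i) = 1 := by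
      intro i
      rw [hdd]
      simp only
      rw [norm_prod]
      exact Finset.prod_eq_one (fun t _ => hφabs _)
    have hprodφ : ∏ t ∈ Finset.range n, f t = 1 := by
      have h1 : ∏ t ∈ Finset.range n, f t = ∏ j : Fin n, φ j := by
        rw [← Fin.prod_univ_eq_prod_range (fun t => φ (t : Fin n)) n]
        exact Finset.prod_congr rfl (fun j _ => by simp [hf, Fin.cast_val_eq_self])
      rw [h1, hφ]
      simp only
      rw [Finset.prod_div_distrib]
      have h2 : ∏ j : Fin n, b (j + κ) = ∏ j : Fin n, b j :=
        Fintype.prod_equiv (Equiv.addRight κ) _ _ (fun j => rfl)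
      rw [h2, ← hprod, div_self]
      exact Finset.prod_ne_zero_iff.mpr (fun j _ => hz j)
    refine ue_of_data hn a b κ d hdabs ?_
    intro m
    by_cases hm : m + 1 = 0
    · have hd1 : d (m + 1) = 1 := by
        rw [hdd, hm]
        simp
      have hmval : (m : ℕ) = n - 1 := by
        have h2 : ((m + 1 : Fin n) : ℕ) = 0 := by rw [hm]; rfl
        have h1 : ((1 : Fin n) : ℕ) = 1 := by
          rw [Fin.val_one']
          exact Nat.mod_eq_of_lt (by omega)
        rw [Fin.val_add, h1] at h2
        have hlt := m.isLt
        have hdvd := Nat.dvd_of_mod_eq_zero h2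
        have := Nat.le_of_dvd (by omega) hdvd
        omega
      have hsplit : d m * φ m = 1 := by
        have hnn : n = (n - 1) + 1 := by omega
        rw [hnn, Finset.prod_range_succ] at hprodφ
        rw [← hprodφ, hdd]
        simp only
        rw [hmval]
        congr 1
        rw [hf]
        simp only
        rw [← hmval, Fin.cast_val_eq_self]
      have hconj : (starRingEnd ℂ) (d m) = φ m := by
        have h3 : (starRingEnd ℂ) (d m) * (d m * φ m) = (starRingEnd ℂ) (d m) := by
          rw [hsplit, mul_one]
        calc (starRingEnd ℂ) (d m) = (starRingEnd ℂ) (d m) * (d m * φ m) := by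
              rw [hsplit, mul_one]
        _ = ((starRingEnd ℂ) (d m) * d m) * φ m := by ring
        _ = φ m := by rw [conj_mul_self_of_abs (hdabs m), one_mul]
      rw [hd1, hconj, mul_one, hφ]
      simp only
      rw [div_mul_cancel₀ _ (hz m)]
    · have hstep : d (m + 1) = d m * φ m := by
        rw [hdd]
        simp only
        rw [val_add_one_of_ne_neg_one hn hm, Finset.prod_range_succ]
        congr 1
        simp [hf, Fin.cast_val_eq_self]
      rw [hstep]
      have : (starRingEnd ℂ) (d m) * (d m * φ m) * a m
          = ((starRingEnd ℂ) (d m) * d m) * (φ m * a m) := by ring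
      rw [this, conj_mul_self_of_abs (hdabs m), one_mul, hφ]
      simp only
      rw [div_mul_cancel₀ _ (hz m)]

end reverse

section fwdhelp
variable {n : ℕ} [NeZero n]
open Fin.CommRing

lemma val_ne_zero_of_ne_zero {x : Fin n} (hx : x ≠ 0) : (x : ℕ) ≠ 0 := by
  intro h
  apply hx
  apply Fin.ext
  simp [h]

lemma val_neg_add_of_ne {x : Fin n} (hx : x ≠ 0) : (x : ℕ) + ((-x : Fin n) : ℕ) = n := by
  have h0 : x + (-x) = 0 := add_neg_cancel x
  have hv : (((x : ℕ) + ((-x : Fin n) : ℕ))) % n = 0 := by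
    rw [← Fin.val_add, h0]
    simp
  have hx1 : (x : ℕ) ≠ 0 := val_ne_zero_of_ne_zero hx
  have hx2 : ((-x : Fin n) : ℕ) ≠ 0 := val_ne_zero_of_ne_zero (neg_ne_zero.mpr hx)
  obtain ⟨c, hc⟩ := Nat.dvd_of_mod_eq_zero hv
  have h1 : (x : ℕ) < n := x.isLt
  have h2 : ((-x : Fin n) : ℕ) < n := (-x).isLt
  match c, hc with
  | 0, hc => omega
  | 1, hc => omega
  | (c+2), hc =>
    exfalso
    have : n * 2 ≤ n * (c + 2) := Nat.mul_le_mul_left n (by omega)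
    omega

lemma natCast_inj_of_lt {s t : ℕ} (hs : s < n) (ht : t < n) (h : (s : Fin n) = (t : Fin n)) :
    s = t := by
  have := congrArg Fin.val h
  rwa [Fin.val_natCast, Fin.val_natCast, Nat.mod_eq_of_lt hs, Nat.mod_eq_of_lt ht] at this

lemma assemble (a b : Fin n → ℂ) (p q κ : Fin n) (hpq : p ≠ q)
    (hap : norm (a p) = norm (b (p + κ)))
    (haq : norm (a q) = norm (b (q + κ)))
    (m1 : ∀ t : ℕ, 0 < t → t < ((q - p : Fin n) : ℕ) →
      norm (a (p + (t : Fin n))) = norm (b (p + (t : Fin n) + κ)))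
    (m2 : ∀ s : ℕ, 0 < s → s < ((p - q : Fin n) : ℕ) →
      norm (a (q + (s : Fin n))) = norm (b (q + (s : Fin n) + κ))) :
    ∀ j : Fin n, norm (a j) = norm (b (j + κ)) := by
  intro j
  have hdn : ((q - p : Fin n) : ℕ) + ((p - q : Fin n) : ℕ) = n := by
    have h := val_neg_add_of_ne (x := q - p) (sub_ne_zero.mpr (Ne.symm hpq))
    rwa [neg_sub] at h
  set d := ((q - p : Fin n) : ℕ) with hd
  set e := ((j - p : Fin n) : ℕ) with he
  have hje : j = p + (e : Fin n) := by
    rw [he, Fin.cast_val_eq_self]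
    ring
  have hen : e < n := (j - p).isLt
  rcases Nat.lt_trichotomy e d with hlt | heq | hgt
  · rcases Nat.eq_zero_or_pos e with he0 | hepos
    · have : j = p := by rw [hje, he0]; simp
      rw [this]
      exact hap
    · rw [hje]
      exact m1 e hepos hlt
  · have : j = q := by
      rw [hje, heq, hd, Fin.cast_val_eq_self]
      ring
    rw [this]
    exact haq
  · have hds : d + (e - d) = e := by omega
    have hcast : ((e : ℕ) : Fin n) = ((d : ℕ) : Fin n) + ((e - d : ℕ) : Fin n) := by
      rw [← Nat.cast_add, hds]
    have hjq : j = q + ((e - d : ℕ) : Fin n) := by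
      rw [hje, hcast, hd, Fin.cast_val_eq_self]
      ring
    rw [hjq]
    exact m2 (e - d) (by omega) (by omega)

end fwdhelp

section fwdmain
variable {n : ℕ} [NeZero n]
open Fin.CommRing

lemma forward_shift (hn : 3 ≤ n) (a b : Fin n → ℂ) (U : Fin n → Fin n → ℂ)
    (h1 : ∀ i j, a i * U (i+1) (j+1) = b j * U i j)
    (h2 : ∀ i j, (starRingEnd ℂ) (a i) * U i j = (starRingEnd ℂ) (b j) * U (i+1) (j+1))
    (hrow : ∀ i, ∃ j, U i j ≠ 0)
    (hcol : ∀ j, ∃ i, U i j ≠ 0)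
    (hza : (Finset.univ.filter fun j => a j = 0).card ≤ 2)
    (hcard : (Finset.univ.filter fun j => b j = 0).card
      = (Finset.univ.filter fun j => a j = 0).card) :
    ∃ κ : Fin n, ∀ j, norm (a j) = norm (b (j + κ)) := by
  set za := (Finset.univ.filter fun j => a j = 0) with hza_def
  have hmem_za : ∀ i, i ∈ za ↔ a i = 0 := by
    intro i
    rw [hza_def, Finset.mem_filter]
    simp
  -- three cases on the number of zeros among the a's
  rcases (by omega : za.card = 0 ∨ za.card = 1 ∨ za.card = 2) with hcz | hcz | hcz
  · -- no zeros
    have hA : ∀ i, a i ≠ 0 := by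
      intro i hi
      have : i ∈ za := (hmem_za i).mpr hi
      rw [Finset.card_eq_zero] at hcz
      rw [hcz] at this
      exact absurd this (Finset.notMem_empty i)
    obtain ⟨j0, hj0⟩ := hrow 0
    obtain ⟨_, hm⟩ := chain a b U h1 h2 hj0 n (fun t _ => hA _)
    refine ⟨j0, fun j => ?_⟩
    have := hm (j : ℕ) j.isLt
    rwa [Fin.cast_val_eq_self, zero_add, add_comm j0 j] at this
  · -- one zero
    obtain ⟨p, hpz⟩ := Finset.card_eq_one.mp hcz
    have hP : ∀ i, a i = 0 ↔ i = p := by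
      intro i
      rw [← hmem_za, hpz, Finset.mem_singleton]
    have hp : a p = 0 := (hP p).mpr rfl
    obtain ⟨j1, hj1⟩ := hrow (p + 1)
    have hU' : U (p + 1) (p + 1 + (j1 - (p + 1))) ≠ 0 := by
      rw [show p + 1 + (j1 - (p + 1)) = j1 by ring]
      exact hj1
    obtain ⟨hb1, _, hmatch⟩ := arcLemma a b U h1 h2 p n (j1 - (p + 1)) (by omega) hp
      (fun t ht0 htn h0 => by
        have h3 : p + (t : Fin n) = p := (hP _).mp h0
        have h4 : ((t : ℕ) : Fin n) = 0 := by
          have := h3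
          rwa [add_eq_left] at this
        rw [Fin.natCast_eq_zero] at h4
        have := Nat.le_of_dvd ht0 h4
        omega)
      (by rw [Fin.natCast_self, add_zero]; exact hp)
      hU'
    refine ⟨j1 - (p + 1), fun j => ?_⟩
    by_cases hjp : j = p
    · rw [hjp, hp, hb1]
    · have hje : j = p + (((j - p : Fin n) : ℕ) : Fin n) := by
        rw [Fin.cast_val_eq_self]
        ring
      have h0 : 0 < ((j - p : Fin n) : ℕ) :=
        Nat.pos_of_ne_zero (val_ne_zero_of_ne_zero (sub_ne_zero.mpr hjp))
      rw [hje]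
      exact hmatch _ h0 (j - p).isLt
  · -- two zeros
    obtain ⟨p, q, hpq, hpqz⟩ := Finset.card_eq_two.mp hcz
    have hPQ : ∀ i, a i = 0 ↔ (i = p ∨ i = q) := by
      intro i
      rw [← hmem_za, hpqz, Finset.mem_insert, Finset.mem_singleton]
    have hp : a p = 0 := (hPQ p).mpr (Or.inl rfl)
    have hq : a q = 0 := (hPQ q).mpr (Or.inr rfl)
    set d := ((q - p : Fin n) : ℕ) with hd_def
    set d' := ((p - q : Fin n) : ℕ) with hd'_def
    have hdd' : d + d' = n := by
      have h := val_neg_add_of_ne (x := q - p) (sub_ne_zero.mpr (Ne.symm hpq))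
      rwa [neg_sub] at h
    have hd0 : 0 < d := Nat.pos_of_ne_zero (val_ne_zero_of_ne_zero (sub_ne_zero.mpr (Ne.symm hpq)))
    have hd'0 : 0 < d' := Nat.pos_of_ne_zero (val_ne_zero_of_ne_zero (sub_ne_zero.mpr hpq))
    have hcastd : ((d : ℕ) : Fin n) = q - p := by rw [hd_def, Fin.cast_val_eq_self]
    have hcastd' : ((d' : ℕ) : Fin n) = p - q := by rw [hd'_def, Fin.cast_val_eq_self]
    -- chain at p
    obtain ⟨j1, hj1⟩ := hrow (p + 1)
    set κ₁ := j1 - (p + 1) with hκ₁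
    have hU1 : U (p + 1) (p + 1 + κ₁) ≠ 0 := by
      rw [show p + 1 + κ₁ = j1 by rw [hκ₁]; ring]
      exact hj1
    have hmid1 : ∀ t : ℕ, 0 < t → t < d → a (p + (t : Fin n)) ≠ 0 := by
      intro t ht0 htd h0
      rcases (hPQ _).mp h0 with h3 | h3
      · rw [add_eq_left, Fin.natCast_eq_zero] at h3
        have := Nat.le_of_dvd ht0 h3
        omega
      · have h4 : ((t : ℕ) : Fin n) = q - p := by
          rw [← h3]; ring
        rw [← hcastd] at h4
        have := natCast_inj_of_lt (by omega) (by omega) h4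
        omega
    obtain ⟨hbp1, hbq1, match1⟩ := arcLemma a b U h1 h2 p d κ₁ (by omega) hp hmid1
      (by rw [hcastd, show p + (q - p) = q by ring]; exact hq) hU1
    rw [hcastd, show p + (q - p) = q by ring] at hbq1
    -- chain at q
    obtain ⟨j2, hj2⟩ := hrow (q + 1)
    set κ₂ := j2 - (q + 1) with hκ₂
    have hU2 : U (q + 1) (q + 1 + κ₂) ≠ 0 := by
      rw [show q + 1 + κ₂ = j2 by rw [hκ₂]; ring]
      exact hj2
    have hmid2 : ∀ t : ℕ, 0 < t → t < d' → a (q + (t : Fin n)) ≠ 0 := by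
      intro t ht0 htd h0
      rcases (hPQ _).mp h0 with h3 | h3
      · have h4 : ((t : ℕ) : Fin n) = p - q := by
          rw [← h3]; ring
        rw [← hcastd'] at h4
        have := natCast_inj_of_lt (by omega) (by omega) h4
        omega
      · rw [add_eq_left, Fin.natCast_eq_zero] at h3
        have := Nat.le_of_dvd ht0 h3
        omega
    obtain ⟨hbq2, hbp2, match2⟩ := arcLemma a b U h1 h2 q d' κ₂ (by omega) hq hmid2
      (by rw [hcastd', show q + (p - q) = p by ring]; exact hp) hU2
    rw [hcastd', show q + (p - q) = p by ring] at hbp2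
    -- we will show κ₁ works, by providing the arc-2 matching
    have hm2 : ∀ s : ℕ, 0 < s → s < d' →
        norm (a (q + (s : Fin n))) = norm (b (q + (s : Fin n) + κ₁)) := by
      by_cases hkk : κ₁ = κ₂
      · intro s hs0 hsd
        rw [hkk]
        exact match2 s hs0 hsd
      · -- the zeros of b
        set zb := (Finset.univ.filter fun j => b j = 0) with hzb_def
        have hmem_zb : ∀ i, i ∈ zb ↔ b i = 0 := by
          intro i
          rw [hzb_def, Finset.mem_filter]
          simp
        have hzb2 : zb.card = 2 := by rw [hcard]; exact hcz
        -- four zero positions collapse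
        have e1 : p + κ₁ = q + κ₂ := by
          by_contra hne
          have hsub : ({p + κ₁, p + κ₂, q + κ₂} : Finset (Fin n)) ⊆ zb := by
            intro x hx
            simp only [Finset.mem_insert, Finset.mem_singleton] at hx
            rcases hx with h | h | h
            · rw [hmem_zb, h]; exact hbp1
            · rw [hmem_zb, h]; exact hbp2
            · rw [hmem_zb, h]; exact hbq2
          have hcard3 : ({p + κ₁, p + κ₂, q + κ₂} : Finset (Fin n)).card = 3 := by
            rw [Finset.card_insert_of_notMem, Finset.card_insert_of_notMem,
              Finset.card_singleton]
            · simp only [Finset.mem_singleton]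
              intro h
              exact hpq (add_right_cancel h)
            · simp only [Finset.mem_insert, Finset.mem_singleton]
              push_neg
              exact ⟨fun h => hkk (add_left_cancel h), hne⟩
          have := Finset.card_le_card hsub
          omega
        have e2 : q + κ₁ = p + κ₂ := by
          by_contra hne
          have hsub : ({q + κ₁, q + κ₂, p + κ₂} : Finset (Fin n)) ⊆ zb := by
            intro x hx
            simp only [Finset.mem_insert, Finset.mem_singleton] at hx
            rcases hx with h | h | h
            · rw [hmem_zb, h]; exact hbq1
            · rw [hmem_zb, h]; exact hbq2
            · rw [hmem_zb, h]; exact hbp2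
          have hcard3 : ({q + κ₁, q + κ₂, p + κ₂} : Finset (Fin n)).card = 3 := by
            rw [Finset.card_insert_of_notMem, Finset.card_insert_of_notMem,
              Finset.card_singleton]
            · simp only [Finset.mem_singleton]
              intro h
              exact hpq (add_right_cancel h).symm
            · simp only [Finset.mem_insert, Finset.mem_singleton]
              push_neg
              exact ⟨fun h => hkk (add_left_cancel h), hne⟩
          have := Finset.card_le_card hsub
          omega
        have hδδ : (q - p) + (q - p) = 0 := by linear_combination e2 - e1
        have hqδ : q + (q - p) = p := by linear_combination hδδ
        have hκ21 : κ₂ = κ₁ + (q - p) := by linear_combination -e2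
        have hneg : -(q - p) = q - p := by linear_combination - hδδ
        have hdd : d + d = n := by
          have h := val_neg_add_of_ne (x := q - p) (sub_ne_zero.mpr (Ne.symm hpq))
          rw [hneg] at h
          rw [hd_def]
          omega
        have hd'd : d' = d := by omega
        -- zeros of b are exactly the two found positions
        set z1 := p + κ₁ with hz1
        set z2 := q + κ₁ with hz2
        have hz12 : z1 ≠ z2 := by
          rw [hz1, hz2]
          intro h
          exact hpq (add_right_cancel h)
        have hzbeq : zb = {z1, z2} := by
          symm
          apply Finset.eq_of_subset_of_card_le
          · intro x hx
            simp only [Finset.mem_insert, Finset.mem_singleton] at hx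
            rcases hx with h | h
            · rw [hmem_zb, h]; exact hbp1
            · rw [hmem_zb, h]; exact hbq1
          · rw [hzb2, Finset.card_insert_of_notMem (by simpa using hz12),
              Finset.card_singleton]
        have hZB : ∀ x, b x = 0 ↔ (x = z1 ∨ x = z2) := by
          intro x
          rw [← hmem_zb, hzbeq, Finset.mem_insert, Finset.mem_singleton]
        -- reverse chain on V from row z2+1
        set V : Fin n → Fin n → ℂ := fun j i => (starRingEnd ℂ) (U i j) with hV
        have hv1 : ∀ j i, b j * V (j+1) (i+1) = a i * V j i := by
          intro j i
          have := congrArg (starRingEnd ℂ) (h2 i j)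
          simp only [_root_.map_mul, starRingEnd_self_apply] at this
          exact this.symm
        have hv2 : ∀ j i, (starRingEnd ℂ) (b j) * V j i
            = (starRingEnd ℂ) (a i) * V (j+1) (i+1) := by
          intro j i
          have := congrArg (starRingEnd ℂ) (h1 i j)
          simp only [_root_.map_mul, starRingEnd_self_apply] at this
          exact this.symm
        obtain ⟨i2, hi2⟩ := hcol (z2 + 1)
        set lam := i2 - (z2 + 1) with hlam
        have hV2 : V (z2 + 1) (z2 + 1 + lam) ≠ 0 := by
          rw [show z2 + 1 + lam = i2 by rw [hlam]; ring, hV]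
          simpa using hi2
        have hbz2 : b z2 = 0 := hbq1
        have hmidV : ∀ t : ℕ, 0 < t → t < d → b (z2 + (t : Fin n)) ≠ 0 := by
          intro t ht0 htd h0
          rcases (hZB _).mp h0 with h3 | h3
          · have h4 : ((t : ℕ) : Fin n) = q - p := by
              have : z2 + ((t : ℕ) : Fin n) = z2 + (q - p) := by
                rw [h3, hz1, hz2]
                linear_combination -hqδ
              exact add_left_cancel this
            rw [← hcastd] at h4
            have := natCast_inj_of_lt (by omega) (by omega) h4
            omega
          · rw [add_eq_left, Fin.natCast_eq_zero] at h3
            have := Nat.le_of_dvd ht0 h3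
            omega
        have hpdV : b (z2 + ((d : ℕ) : Fin n)) = 0 := by
          rw [hcastd]
          have : z2 + (q - p) = z1 := by
            rw [hz1, hz2]
            linear_combination hqδ
          rw [this]
          exact hbp1
        obtain ⟨haz1, haz2, matchV⟩ := arcLemma b a V hv1 hv2 z2 d lam (by omega)
          hbz2 hmidV hpdV hV2
        -- a's zeros: z2 + lam is p or q
        rcases (hPQ _).mp haz1 with hA | hA
        · -- z2 + lam = p :  b (z2+t) = a (p+t)
          intro s hs0 hsd'
          have hsd : s < d := by omega
          have hx1 : z2 + (s : Fin n) + lam = p + (s : Fin n) := by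
            rw [show z2 + (s : Fin n) + lam = (z2 + lam) + (s : Fin n) by ring, hA]
          have mB := matchV s hs0 hsd
          rw [hx1] at mB
          -- mB : |b (z2 + s)| = |a (p + s)|
          have hqs : q + (s : Fin n) + κ₂ = p + (s : Fin n) + κ₁ := by
            rw [hκ21]
            linear_combination hqδ
          have h5 := match2 s hs0 hsd'
          rw [hqs] at h5
          -- h5 : |a (q+s)| = |b (p+s+κ₁)|
          have h6 := match1 s hs0 hsd
          -- h6 : |a (p+s)| = |b (p+s+κ₁)|
          have h7 : norm (a (q + (s : Fin n))) = norm (a (p + (s : Fin n))) := by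
            rw [h5, h6]
          have hx2 : z2 + (s : Fin n) = q + (s : Fin n) + κ₁ := by
            rw [hz2]
            ring
          rw [hx2] at mB
          rw [h7, ← mB]
        · -- z2 + lam = q : direct matching of arc 2 with κ₁
          intro s hs0 hsd'
          have hsd : s < d := by omega
          have hx1 : z2 + (s : Fin n) + lam = q + (s : Fin n) := by
            rw [show z2 + (s : Fin n) + lam = (z2 + lam) + (s : Fin n) by ring, hA]
          have mA := matchV s hs0 hsd
          rw [hx1] at mA
          have hx2 : z2 + (s : Fin n) = q + (s : Fin n) + κ₁ := by
            rw [hz2]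
            ring
          rw [hx2] at mA
          exact mA.symm
    refine ⟨κ₁, assemble a b p q κ₁ hpq ?_ ?_ match1 hm2⟩
    · simp [hp, hbp1]
    · simp [hq, hbq1]

end fwdmain

theorem stmt5 (n : ℕ) [NeZero n] (hn : 3 ≤ n) (a b : Fin n → ℂ)
    (hz : (Finset.univ.filter fun j => a j = 0).card ≤ 2) :
    UnitarilyEquiv (wsMatrix a) (wsMatrix b) ↔
      (∏ j, a j = ∏ j, b j ∧
        ∃ k : ℕ, 1 ≤ k ∧ k ≤ n ∧
          ∀ j : Fin n, ‖a j‖ = ‖b (j + Fin.ofNat n k)‖) := by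
  constructor
  · intro h
    refine ⟨prod_eq_of_ue hn a b h, ?_⟩
    have hcard := card_zero_eq_of_ue hn a b h
    obtain ⟨U, hUm, hB⟩ := h
    obtain ⟨h1, h2⟩ := rel_of_ue hn a b U hUm hB
    have hU1 : U * Uᴴ = 1 := by
      have := (Matrix.mem_unitaryGroup_iff).mp hUm
      rwa [Matrix.star_eq_conjTranspose] at this
    have hU2 : Uᴴ * U = 1 := by
      have := (Matrix.mem_unitaryGroup_iff').mp hUm
      rwa [Matrix.star_eq_conjTranspose] at this
    have hrow : ∀ i, ∃ j, U i j ≠ 0 := by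
      intro i
      by_contra hc
      push_neg at hc
      have h3 := congrFun (congrFun hU1 i) i
      rw [Matrix.mul_apply] at h3
      have h4 : (1 : Matrix (Fin n) (Fin n) ℂ) i i = 1 := Matrix.one_apply_eq i
      rw [h4] at h3
      have h5 : ∑ j, U i j * Uᴴ j i = 0 := by
        apply Finset.sum_eq_zero
        intro j _
        rw [hc j, zero_mul]
      rw [h5] at h3
      exact one_ne_zero h3.symm
    have hcol : ∀ j, ∃ i, U i j ≠ 0 := by
      intro j
      by_contra hc
      push_neg at hc
      have h3 := congrFun (congrFun hU2 j) j
      rw [Matrix.mul_apply] at h3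
      have h4 : (1 : Matrix (Fin n) (Fin n) ℂ) j j = 1 := Matrix.one_apply_eq j
      rw [h4] at h3
      have h5 : ∑ i, Uᴴ j i * U i j = 0 := by
        apply Finset.sum_eq_zero
        intro i _
        rw [hc i, mul_zero]
      rw [h5] at h3
      exact one_ne_zero h3.symm
    obtain ⟨κ, hκ⟩ := forward_shift hn a b U h1 h2 hrow hcol hz hcard
    by_cases hκ0 : κ = 0
    · refine ⟨n, by omega, le_refl n, fun j => ?_⟩
      rw [show Fin.ofNat n n = 0 by ext; simp]
      have := hκ j
      rwa [hκ0] at this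
    · refine ⟨(κ : ℕ), Nat.pos_of_ne_zero (val_ne_zero_of_ne_zero hκ0), le_of_lt κ.isLt,
        fun j => ?_⟩
      have := hκ j
      rwa [show Fin.ofNat n (κ : ℕ) = κ by ext; simp]
  · rintro ⟨hprod, k, _, _, habs⟩
    exact ue_of_shift hn a b (Fin.ofNat n k) hprod habs
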